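/- Let v be a dense vertex lying in almost-clique C_j. Then v has at most εΔ dense neighbors lying outside C_j; that is, the external degree of v satisfies d̄(v) ≤ εΔ. -/

import Mathlib

open Finset

attribute [local instance] Classical.propDecidable

variable {V : Type*}

/-- `uv` is a friend edge: they are adjacent and share at least `(1-ε)Δ` neighbors. -/
def friendAdj [Fintype V] [DecidableEq V] (G : SimpleGraph V) [DecidableRel G.Adj]
    (Δ : ℕ) (ε : ℝ) (u v : V) : Prop :=
  G.Adj u v ∧ (1 - ε) * (Δ : ℝ) ≤ ((G.neighborFinset u ∩ G.neighborFinset v).card : ℝ)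

/-- The friends of `v`. -/
noncomputable def friends [Fintype V] [DecidableEq V] (G : SimpleGraph V) [DecidableRel G.Adj]
    (Δ : ℕ) (ε : ℝ) (v : V) : Finset V :=
  Finset.univ.filter (fun w => friendAdj G Δ ε v w)

/-- `v` is dense: it has at least `(1-ε)Δ` friends. -/
def isDense [Fintype V] [DecidableEq V] (G : SimpleGraph V) [DecidableRel G.Adj]
    (Δ : ℕ) (ε : ℝ) (v : V) : Prop :=
  (1 - ε) * (Δ : ℝ) ≤ ((friends G Δ ε v).card : ℝ)

/-- The graph on dense vertices whose edges are the friend edges; its connected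
components are the almost-cliques. -/
def friendGraph [Fintype V] [DecidableEq V] (G : SimpleGraph V) [DecidableRel G.Adj]
    (Δ : ℕ) (ε : ℝ) : SimpleGraph V where
  Adj u v := friendAdj G Δ ε u v ∧ isDense G Δ ε u ∧ isDense G Δ ε v
  symm := by
    constructor
    rintro u v ⟨⟨hadj, hcard⟩, hu, hv⟩
    exact ⟨⟨hadj.symm, by rwa [Finset.inter_comm]⟩, hv, hu⟩
  loopless := ⟨fun v h => G.loopless.irrefl v h.1.1⟩

/-- A dense vertex `v` has at most `εΔ` dense neighbors outside its own almost-clique: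
the external degree satisfies `d̄(v) ≤ εΔ`. -/
theorem stmt_2 [Fintype V] [DecidableEq V] (G : SimpleGraph V) [DecidableRel G.Adj]
    (Δ : ℕ) (ε : ℝ) (hΔ : ∀ w, G.degree w ≤ Δ) (hε0 : 0 < ε) (hε1 : ε < 1)
    (v : V) (hv : isDense G Δ ε v) :
    (((G.neighborFinset v).filter
        (fun w => isDense G Δ ε w ∧ ¬ (friendGraph G Δ ε).Reachable v w)).card : ℝ)
      ≤ ε * (Δ : ℝ) := by
  classical
  set S := (G.neighborFinset v).filter
      (fun w => isDense G Δ ε w ∧ ¬ (friendGraph G Δ ε).Reachable v w) with hS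
  have hdisj : Disjoint S (friends G Δ ε v) := by
    rw [Finset.disjoint_left]
    intro w hwS hwF
    simp only [friends, Finset.mem_filter] at hwF
    simp only [hS, Finset.mem_filter] at hwS
    exact hwS.2.2 (SimpleGraph.Adj.reachable (G := friendGraph G Δ ε) (show friendAdj G Δ ε v w ∧ isDense G Δ ε v ∧ isDense G Δ ε w from ⟨hwF.2, hv, hwS.2.1⟩))
  have hsub : S ∪ friends G Δ ε v ⊆ G.neighborFinset v := by
    intro w hw
    rcases Finset.mem_union.mp hw with h | h
    · exact (Finset.mem_filter.mp h).1
    · simp only [friends, Finset.mem_filter] at h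
      exact (G.mem_neighborFinset v w).mpr h.2.1
  have hcard : S.card + (friends G Δ ε v).card ≤ Δ := by
    have h1 := Finset.card_le_card hsub
    rw [Finset.card_union_of_disjoint hdisj] at h1
    calc S.card + (friends G Δ ε v).card ≤ (G.neighborFinset v).card := h1
    _ = G.degree v := rfl
    _ ≤ Δ := hΔ v
  have h2 : (S.card : ℝ) + ((friends G Δ ε v).card : ℝ) ≤ (Δ : ℝ) := by
    exact_mod_cast hcard
  have h3 := hv
  unfold isDense at h3
  linarith
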